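/- Let R be a commutative ring, m ≥ 1, x_1,…,x_m ∈ R. Then Π_{ε ∈ {0,1}^m} det A_ε = (x_1⋯x_m)^{2^m} · Π_{∅ ≠ S ⊆ {1,…,m}} (−1)^{|S|−1} (Σ_{i∈S} Π_{j∈S, j≠i} x_j − Π_{j∈S} x_j), where A_ε is the m×m matrix with (i,i) entry x_i(1 − ε_i x_i) and (i,k) entry ε_i x_k for k ≠ i. (This product is the defining polynomial of the singular locus of Lauricella's system I_B(m).) -/

import Mathlib

/-- The matrix `A_ε` of the linear system coming from the `(0,1)`-initial forms `L_i^B`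
of Lauricella's `F_B` system: the `(i,i)` entry is `x_i(1 − ε_i x_i)` and the `(i,k)`
entry for `k ≠ i` is `ε_i x_k`, where `ε ∈ {0,1}^m`. -/
def AMat {R : Type*} [CommRing R] {m : ℕ} (x : Fin m → R) (ε : Fin m → Bool) :
    Matrix (Fin m) (Fin m) R :=
  Matrix.of fun i j =>
    if i = j then x i * (1 - (if ε i then x i else 0)) else (if ε i then x j else 0)

open Finset in
lemma det_key {R : Type*} [CommRing R] {ι : Type*} [Fintype ι] [DecidableEq ι]
    (d u v : ι → R) :
    (Matrix.of fun i j => (if i = j then d i else 0) + u i * v j).det =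
      ∏ i, d i + ∑ i, u i * v i * ∏ j ∈ Finset.univ.erase i, d j := by
  classical
  set f := (Matrix.detRowAlternating : (ι → R) [⋀^ι]→ₗ[R] R) with hf
  have hdet : ∀ N : Matrix ι ι R, f N = N.det := fun _ => rfl
  set a : ι → ι → R := fun i => d i • (Pi.single i (1 : R) : ι → R) with ha
  set b : ι → ι → R := fun i => u i • v with hb
  have hrows : (Matrix.of fun i j => (if i = j then d i else 0) + u i * v j : Matrix ι ι R)
      = a + b := by
    funext i j
    simp [a, b, Pi.single_apply, Matrix.of_apply]
    by_cases h : i = j <;> simp [h, eq_comm]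
  have hone : (fun i => Pi.single i (1 : R)) = fun i => (1 : Matrix ι ι R) i := by
    funext i j
    simp [Pi.single_apply, Matrix.one_apply, eq_comm]
  have key : ∀ t : Finset ι, f (t.piecewise b a) =
      (if t = ∅ then ∏ i, d i else 0) +
        ∑ i, (if t = {i} then u i * v i * ∏ j ∈ Finset.univ.erase i, d j else 0) := by
    intro t
    have hsplit : t.piecewise b a = fun i =>
        (t.piecewise u d) i • (t.piecewise (fun _ => v) (fun i => Pi.single i (1 : R))) i := by
      funext i
      by_cases h : i ∈ t <;> simp [Finset.piecewise, h, a, b]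
    have hstep : f (t.piecewise b a) =
        (∏ i, t.piecewise u d i) •
          f (t.piecewise (fun _ => v) (fun i => Pi.single i (1 : R))) := by
      rw [hsplit]
      exact f.map_smul_univ _ _
    rw [hstep]
    have hne : ∀ i : ι, ¬(t = ({i} : Finset ι)) ∨ True := fun _ => Or.inr trivial
    by_cases h0 : t = ∅
    · subst h0
      simp only [Finset.piecewise_empty]
      rw [hone]
      change (∏ x, d x) • Matrix.det (1 : Matrix ι ι R) = _
      have hsing : ∀ i : ι, ¬((∅ : Finset ι) = ({i} : Finset ι)) :=
        fun i h => (Finset.singleton_ne_empty i) h.symm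
      simp [Matrix.det_one, hsing]
    · by_cases h1 : ∃ i, t = {i}
      · obtain ⟨i, rfl⟩ := h1
        have hc : ∏ j, ({i} : Finset ι).piecewise u d j = u i * ∏ j ∈ Finset.univ.erase i, d j := by
          rw [Finset.piecewise_singleton, Finset.prod_update_of_mem (Finset.mem_univ i),
            Finset.sdiff_singleton_eq_erase]
        have hw : ({i} : Finset ι).piecewise (fun _ => v) (fun j => Pi.single j (1 : R))
            = (1 : Matrix ι ι R).updateRow i v := by
          rw [Finset.piecewise_singleton, hone]
          rfl
        have hv : (∑ k, v k • (1 : Matrix ι ι R) k) = v := by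
          funext j
          simp [Matrix.one_apply, Finset.sum_ite_eq']
        rw [hc, hw, hdet]
        have hdu := Matrix.det_updateRow_sum (1 : Matrix ι ι R) i v
        rw [hv] at hdu
        rw [hdu]
        have hsing : ({i} : Finset ι) ≠ ∅ := Finset.singleton_ne_empty i
        simp only [hsing, if_false, Matrix.det_one, smul_eq_mul, mul_one,
          Finset.singleton_inj, zero_add]
        rw [Finset.sum_ite_eq]
        simp
        ring
      · -- card ≥ 2
        have hcard : 1 < t.card := by
          rcases Nat.lt_or_ge t.card 2 with h | h
          · interval_cases hh : t.card
            · exact absurd (Finset.card_eq_zero.mp hh) h0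
            · exact absurd ⟨_, Finset.card_eq_one.mp hh |>.choose_spec⟩ h1
          · omega
        obtain ⟨i, hi, j, hj, hij⟩ := Finset.one_lt_card.mp hcard
        have : f (t.piecewise (fun _ => v) (fun j => Pi.single j (1 : R))) = 0 := by
          show Matrix.det (t.piecewise (fun _ => v) (fun j => Pi.single j (1 : R))) = 0
          refine Matrix.det_zero_of_row_eq hij ?_
          simp [Matrix.of_apply, Finset.piecewise_eq_of_mem _ _ _ hi,
            Finset.piecewise_eq_of_mem _ _ _ hj]
        rw [this]
        simp only [smul_eq_mul, mul_zero]
        have : ∀ i, ¬ (t = {i}) := fun i h => h1 ⟨i, h⟩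
        simp [h0, this]
  calc (Matrix.of fun i j => (if i = j then d i else 0) + u i * v j : Matrix ι ι R).det
      = f (a + b) := by rw [← hrows]; rfl
    _ = ∑ t : Finset ι, f (t.piecewise b a) := by
        rw [add_comm a b]; exact f.map_add_univ b a
    _ = _ := by
        rw [Finset.sum_congr rfl (fun t _ => key t)]
        rw [Finset.sum_add_distrib]
        congr 1
        · simp [Finset.sum_ite_eq']
        · rw [Finset.sum_comm]
          exact Finset.sum_congr rfl fun i _ => by simp [Finset.sum_ite_eq']

lemma det_AMat {R : Type*} [CommRing R] {m : ℕ} (x : Fin m → R) (S : Finset (Fin m)) :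
    (AMat x (fun i => decide (i ∈ S))).det =
      (∏ i, x i) * (if S = ∅ then 1 else
        (-1 : R) ^ (S.card - 1) *
          ((∑ i ∈ S, ∏ j ∈ S.erase i, x j) - ∏ j ∈ S, x j)) := by
  classical
  set d : Fin m → R := fun i => if i ∈ S then -(x i * x i) else x i with hd
  set u : Fin m → R := fun i => if i ∈ S then 1 else 0 with hu
  have hA : AMat x (fun i => decide (i ∈ S)) =
      Matrix.of fun i j => (if i = j then d i else 0) + u i * x j := by
    funext i j
    simp only [AMat, Matrix.of_apply, hd, hu]
    by_cases h2 : i = j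
    · subst h2
      by_cases h1 : i ∈ S <;> simp [h1] <;> ring
    · by_cases h1 : i ∈ S <;> simp [h1, h2]
  rw [hA, det_key]
  have hfilter : Finset.univ.filter (· ∈ S) = S := by ext i; simp
  have hfilter' : Finset.univ.filter (· ∉ S) = Sᶜ := by ext i; simp
  by_cases hS : S = ∅
  · subst hS
    simp [hd, hu]
  · have hs1 : 1 ≤ S.card := Finset.card_pos.mpr (Finset.nonempty_of_ne_empty hS)
    have hneg : ∀ (T : Finset (Fin m)), ∏ j ∈ T, -(x j * x j)
        = (-1 : R) ^ T.card * ((∏ j ∈ T, x j) * ∏ j ∈ T, x j) := by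
      intro T
      calc ∏ j ∈ T, -(x j * x j) = ∏ j ∈ T, ((-1 : R) * (x j * x j)) := by
            apply Finset.prod_congr rfl; intros; ring
        _ = _ := by rw [Finset.prod_mul_distrib, Finset.prod_const, Finset.prod_mul_distrib]
    have hprodd : ∏ i, d i
        = (-1 : R) ^ S.card * ((∏ j ∈ S, x j) * ∏ j ∈ S, x j) * ∏ j ∈ Sᶜ, x j := by
      rw [show (∏ i, d i) = ∏ i, (if i ∈ S then -(x i * x i) else x i) from rfl,
        Finset.prod_ite, hfilter, hfilter', hneg]
    have herase : ∀ i ∈ S, ∏ j ∈ Finset.univ.erase i, d j =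
        (-1 : R) ^ (S.card - 1) *
          ((∏ j ∈ S.erase i, x j) * ∏ j ∈ S.erase i, x j) * ∏ j ∈ Sᶜ, x j := by
      intro i hi
      have h1 : (Finset.univ.erase i).filter (· ∈ S) = S.erase i := by
        ext j
        simp only [Finset.mem_filter, Finset.mem_erase, Finset.mem_univ, true_and, and_true]
      have h2 : (Finset.univ.erase i).filter (· ∉ S) = Sᶜ := by
        ext j
        by_cases hj : j ∈ S
        · simp [hj]
        · have hji : j ≠ i := fun he => hj (he ▸ hi)
          simp [hj, hji]
      rw [show (∏ j ∈ Finset.univ.erase i, d j)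
          = ∏ j ∈ Finset.univ.erase i, (if j ∈ S then -(x j * x j) else x j) from rfl,
        Finset.prod_ite, h1, h2, hneg, Finset.card_erase_of_mem hi]
    have hsum : ∑ i, u i * x i * ∏ j ∈ Finset.univ.erase i, d j
        = ∑ i ∈ S, x i * ∏ j ∈ Finset.univ.erase i, d j := by
      rw [show (∑ i, u i * x i * ∏ j ∈ Finset.univ.erase i, d j)
          = ∑ i, (if i ∈ S then x i * ∏ j ∈ Finset.univ.erase i, d j else 0) from
          Finset.sum_congr rfl fun i _ => by
            by_cases h : i ∈ S <;> simp [hu, h]]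
      rw [Finset.sum_ite_mem, Finset.univ_inter]
    rw [hprodd, hsum,
      Finset.sum_congr rfl (fun i hi => by rw [herase i hi])]
    have hterm : ∀ i ∈ S, x i * ((-1 : R) ^ (S.card - 1) *
          ((∏ j ∈ S.erase i, x j) * ∏ j ∈ S.erase i, x j) * ∏ j ∈ Sᶜ, x j)
        = ((-1 : R) ^ (S.card - 1) * (∏ j ∈ Sᶜ, x j) * ∏ j ∈ S, x j)
            * ∏ j ∈ S.erase i, x j := by
      intro i hi
      rw [← Finset.mul_prod_erase S x hi]; ring
    rw [Finset.sum_congr rfl hterm, ← Finset.mul_sum]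
    have hpow : (-1 : R) ^ S.card = -((-1 : R) ^ (S.card - 1)) := by
      conv_lhs => rw [← Nat.sub_add_cancel hs1, pow_succ]
      ring
    rw [hpow, ← Finset.prod_mul_prod_compl S x, if_neg hS]
    ring

theorem prod_AMat_det {R : Type*} [CommRing R] (m : ℕ) (hm : 1 ≤ m) (x : Fin m → R) :
    ∏ ε : Fin m → Bool, (AMat x ε).det =
      (∏ i, x i) ^ (2 ^ m) *
        ∏ S ∈ (Finset.univ : Finset (Fin m)).powerset.filter (fun S => S.Nonempty),
          ((-1 : R) ^ (S.card - 1) *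
            ((∑ i ∈ S, ∏ j ∈ S.erase i, x j) - ∏ j ∈ S, x j)) := by
  classical
  have hbij : Function.Bijective (fun S : Finset (Fin m) => fun i => decide (i ∈ S)) := by
    rw [Fintype.bijective_iff_injective_and_card]
    constructor
    · intro S T h
      ext i
      have := congrFun h i
      simpa using this
    · simp [Fintype.card_finset]
  have hre := Fintype.prod_bijective _ hbij
    (fun S : Finset (Fin m) => (AMat x (fun i => decide (i ∈ S))).det)
    (fun ε => (AMat x ε).det) (fun S => rfl)
  rw [← hre, Finset.prod_congr rfl (fun S _ => det_AMat x S), Finset.prod_mul_distrib,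
    Finset.prod_const]
  congr 1
  · rw [Finset.card_univ, Fintype.card_finset, Fintype.card_fin]
  · rw [Finset.powerset_univ, Finset.prod_filter]
    apply Finset.prod_congr rfl
    intro S _
    by_cases h : S = ∅ <;>
      simp [h, Finset.nonempty_iff_ne_empty]
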